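/- arXiv:2202.00627 — 2 statements merged into one kernel-verified Lean document; each statement's English description precedes it below -/
import Mathlib

section
/- Let n ≥ 6 with n ≡ 1 (mod 3). If d ≥ 1 + 2n·(ln 2 + ln((n-1)/3)/3)/ln(9/8), then p_d(n)² < p_d(n-1)·p_d(n+1); that is, p_d is strictly log-convex at n. -/
open PowerSeries Finset

def Mf : ℕ → ℕ
  | 0 => 1
  | 1 => 1
  | 2 => 2
  | 3 => 3
  | 4 => 4
  | (m + 5) => 3 * Mf (m + 2)

lemma Mf_add_five (m : ℕ) : Mf (m + 5) = 3 * Mf (m + 2) := by rw [Mf]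

lemma Mf_pos : ∀ m, 0 < Mf m
  | 0 => by norm_num [Mf]
  | 1 => by norm_num [Mf]
  | 2 => by norm_num [Mf]
  | 3 => by norm_num [Mf]
  | 4 => by norm_num [Mf]
  | (m + 5) => by rw [Mf_add_five]; have := Mf_pos (m + 2); omega

lemma Mf_le_succ : ∀ m, Mf m ≤ Mf (m + 1)
  | 0 => by norm_num [Mf]
  | 1 => by norm_num [Mf]
  | 2 => by norm_num [Mf]
  | 3 => by norm_num [Mf]
  | 4 => by rw [show (4:ℕ) + 1 = 0 + 5 by rfl, Mf_add_five]; norm_num [Mf]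
  | (m + 5) => by
      rw [Mf_add_five, show m + 5 + 1 = (m + 1) + 5 by omega, Mf_add_five,
        show m + 1 + 2 = (m + 2) + 1 by omega]
      exact Nat.mul_le_mul_left 3 (Mf_le_succ (m + 2))

lemma Mf_monotone : Monotone Mf := monotone_nat_of_le_succ Mf_le_succ

lemma Mf_two : ∀ m, 2 * Mf m ≤ Mf (m + 2)
  | 0 => by norm_num [Mf]
  | 1 => by norm_num [Mf]
  | 2 => by norm_num [Mf]
  | 3 => by rw [show (3:ℕ) + 2 = 0 + 5 by rfl, Mf_add_five]; norm_num [Mf]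
  | 4 => by rw [show (4:ℕ) + 2 = 1 + 5 by rfl, Mf_add_five]; norm_num [Mf]
  | (m + 5) => by
      rw [Mf_add_five, show m + 5 + 2 = (m + 2) + 5 by omega, Mf_add_five]
      calc 2 * (3 * Mf (m + 2)) = 3 * (2 * Mf (m + 2)) := by ring
      _ ≤ 3 * Mf (m + 2 + 2) := Nat.mul_le_mul_left 3 (Mf_two (m + 2))
      _ = 3 * Mf (m + 4) := by norm_num
      _ ≤ 3 * Mf (m + 2 + 2) := le_refl _

lemma Mf_three : ∀ m, 3 * Mf m ≤ Mf (m + 3)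
  | 0 => by norm_num [Mf]
  | 1 => by norm_num [Mf]
  | (m + 2) => by rw [show m + 2 + 3 = m + 5 by omega, Mf_add_five]

lemma Mf_four : ∀ m, 4 * Mf m ≤ Mf (m + 4)
  | 0 => by norm_num [Mf]
  | 1 => by rw [show (1:ℕ) + 4 = 0 + 5 by rfl, Mf_add_five]; norm_num [Mf]
  | 2 => by rw [show (2:ℕ) + 4 = 1 + 5 by rfl, Mf_add_five]; norm_num [Mf]
  | 3 => by rw [show (3:ℕ) + 4 = 2 + 5 by rfl, Mf_add_five]; norm_num [Mf]
  | 4 => by rw [show (4:ℕ) + 4 = 3 + 5 by rfl, Mf_add_five]; norm_num [Mf]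
  | (m + 5) => by
      rw [Mf_add_five, show m + 5 + 4 = (m + 4) + 5 by omega, Mf_add_five,
        show m + 4 + 2 = (m + 2) + 4 by omega]
      calc 4 * (3 * Mf (m + 2)) = 3 * (4 * Mf (m + 2)) := by ring
      _ ≤ 3 * Mf (m + 2 + 4) := Nat.mul_le_mul_left 3 (Mf_four (m + 2))

lemma Mf_super : ∀ i m, Mf i * Mf m ≤ Mf (m + i)
  | 0, m => by simpa [Mf] using le_refl (Mf m)
  | 1, m => by simpa [Mf] using Mf_le_succ m
  | 2, m => by simpa [Mf] using Mf_two m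
  | 3, m => by simpa [Mf] using Mf_three m
  | 4, m => by simpa [Mf] using Mf_four m
  | (i + 5), m => by
      rw [Mf_add_five, show m + (i + 5) = (m + (i + 2)) + 3 by omega]
      calc 3 * Mf (i + 2) * Mf m = 3 * (Mf (i + 2) * Mf m) := by ring
      _ ≤ 3 * Mf (m + (i + 2)) := Nat.mul_le_mul_left 3 (Mf_super (i + 2) m)
      _ ≤ Mf (m + (i + 2) + 3) := Mf_three _

lemma Mf_self_le : ∀ k, k ≤ Mf k
  | 0 => by norm_num [Mf]
  | 1 => by norm_num [Mf]
  | 2 => by norm_num [Mf]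
  | 3 => by norm_num [Mf]
  | 4 => by norm_num [Mf]
  | (m + 5) => by
      rw [Mf_add_five]
      have h1 := Mf_self_le (m + 2)
      omega

lemma Mf_pow : ∀ g k : ℕ, k ^ g ≤ Mf (k * g)
  | 0, k => by norm_num [Mf]
  | (g + 1), k => by
      calc k ^ (g + 1) = k * k ^ g := by ring
      _ ≤ k * Mf (k * g) := Nat.mul_le_mul_left k (Mf_pow g k)
      _ ≤ Mf k * Mf (k * g) := Nat.mul_le_mul_right _ (Mf_self_le k)
      _ ≤ Mf (k * g + k) := Mf_super k (k * g)
      _ = Mf (k * (g + 1)) := by ring_nf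

lemma Mf_prod (s : Finset ℕ) (g : ℕ → ℕ) :
    ∏ j ∈ s, j ^ g j ≤ Mf (∑ j ∈ s, j * g j) := by
  induction s using Finset.induction_on with
  | empty => simp [Mf]
  | @insert a s' h ih =>
    rw [Finset.prod_insert h, Finset.sum_insert h]
    calc a ^ g a * ∏ j ∈ s', j ^ g j ≤ Mf (a * g a) * Mf (∑ j ∈ s', j * g j) :=
      Nat.mul_le_mul (Mf_pow _ _) ih
    _ ≤ Mf (∑ j ∈ s', j * g j + a * g a) := Mf_super _ _
    _ = Mf (a * g a + ∑ j ∈ s', j * g j) := by rw [Nat.add_comm]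

lemma Mf_three_one : ∀ a : ℕ, Mf (3 * a + 4) = 4 * 3 ^ a
  | 0 => by norm_num [Mf]
  | (a + 1) => by
      rw [show 3 * (a + 1) + 4 = (3 * a + 2) + 5 by omega, Mf_add_five,
        show 3 * a + 2 + 2 = 3 * a + 4 by omega, Mf_three_one a]
      ring

def Tset (N m : ℕ) : Finset (ℕ →₀ ℕ) :=
  (finsuppAntidiag (Icc 1 N) m).filter (fun l => ∀ j ∈ Icc 1 N, j ∣ l j)

lemma sum_two_pow (m : ℕ) : ∑ i ∈ range m, 2 ^ i = 2 ^ m - 1 := by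
  induction m with
  | zero => simp
  | succ m ih => rw [Finset.sum_range_succ, ih]; have := Nat.one_le_two_pow (n := m); omega

lemma Tset_card (N : ℕ) : ∀ m, (Tset N m).card ≤ 2 ^ m := by
  intro m
  induction m using Nat.strong_induction_on with
  | _ m ih =>
    rcases Nat.eq_zero_or_pos m with rfl | hm
    · calc (Tset N 0).card ≤ (finsuppAntidiag (Icc 1 N) 0).card := card_le_card (filter_subset _ _)
      _ ≤ 1 := by rw [finsuppAntidiag_zero]; simp
      _ ≤ 2 ^ 0 := by norm_num
    · have hsub : Tset N m ⊆ (Icc 1 m).biUnion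
          (fun k => (Tset N (m - k)).image (fun l => l + Finsupp.single k k)) := by
        intro l hl
        rw [Tset, mem_filter, mem_finsuppAntidiag] at hl
        obtain ⟨⟨hsum, hsupp⟩, hdvd⟩ := hl
        have hne : l.support.Nonempty := by
          by_contra hemp
          rw [Finset.not_nonempty_iff_eq_empty, Finsupp.support_eq_empty] at hemp
          subst hemp
          simp only [Finsupp.coe_zero, Pi.zero_apply, Finset.sum_const_zero] at hsum
          omega
        obtain ⟨k, hk⟩ := hne
        have hkIcc : k ∈ Icc 1 N := hsupp hk
        have hk1 : 1 ≤ k := (mem_Icc.mp hkIcc).1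
        have hlk : l k ≠ 0 := Finsupp.mem_support_iff.mp hk
        have hkdvd : k ∣ l k := hdvd k hkIcc
        have hklk : k ≤ l k := Nat.le_of_dvd (Nat.pos_of_ne_zero hlk) hkdvd
        have hlkm : l k ≤ m := by
          rw [← hsum]
          exact Finset.single_le_sum (fun j _ => Nat.zero_le (l j)) hkIcc
        have hkm : k ∈ Icc 1 m := mem_Icc.mpr ⟨hk1, le_trans hklk hlkm⟩
        set l' := l - Finsupp.single k k with hl'
        have happ : ∀ j, l' j = l j - (Finsupp.single k k) j := fun j => Finsupp.tsub_apply l _ j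
        have hrec : l' + Finsupp.single k k = l := by
          ext j
          rw [Finsupp.add_apply, happ j]
          by_cases hj : j = k
          · subst hj; rw [Finsupp.single_eq_same]; omega
          · rw [Finsupp.single_eq_of_ne' (Ne.symm hj)]; omega
        have hsum' : ∑ j ∈ Icc 1 N, (Finsupp.single k k) j = k := by
          rw [Finset.sum_eq_single k (fun b _ hb => Finsupp.single_eq_of_ne' (Ne.symm hb))
            (fun h => absurd hkIcc h)]
          exact Finsupp.single_eq_same
        rw [mem_biUnion]
        refine ⟨k, hkm, mem_image.mpr ⟨l', ?_, hrec⟩⟩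
        rw [Tset, mem_filter, mem_finsuppAntidiag]
        refine ⟨⟨?_, ?_⟩, ?_⟩
        · show (∑ j ∈ Icc 1 N, l' j) = m - k
          have : (∑ j ∈ Icc 1 N, l' j) + k = m := by
            rw [← hsum', ← Finset.sum_add_distrib]
            rw [← hsum]
            apply Finset.sum_congr rfl
            intro j _
            rw [← Finsupp.add_apply, hrec]
          omega
        · exact subset_trans Finsupp.support_tsub hsupp
        · intro j hj
          rw [happ j]
          by_cases hjk : j = k
          · subst hjk; rw [Finsupp.single_eq_same]; exact Nat.dvd_sub (hdvd j hj) dvd_rfl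
          · rw [Finsupp.single_eq_of_ne' (Ne.symm hjk), Nat.sub_zero]; exact hdvd j hj
      calc (Tset N m).card ≤ _ := card_le_card hsub
      _ ≤ ∑ k ∈ Icc 1 m, ((Tset N (m - k)).image (fun l => l + Finsupp.single k k)).card :=
        card_biUnion_le
      _ ≤ ∑ k ∈ Icc 1 m, 2 ^ (m - k) := by
        apply Finset.sum_le_sum
        intro k hk
        rw [mem_Icc] at hk
        exact le_trans card_image_le (ih (m - k) (by omega))
      _ ≤ 2 ^ m := by
        rw [← Finset.Ico_add_one_right_eq_Icc, Finset.sum_Ico_eq_sum_range]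
        have hr : ∀ i ∈ range (m + 1 - 1), 2 ^ (m - (1 + i)) = 2 ^ (m - 1 - i) := by
          intro i _; congr 1; omega
        rw [Finset.sum_congr rfl hr]
        have := Finset.sum_range_reflect (fun i => 2 ^ i) (m + 1 - 1)
        simp only [Nat.add_sub_cancel] at this ⊢
        have h2 : ∀ i ∈ range m, 2 ^ (m - 1 - i) = (fun i => 2 ^ i) (m - 1 - i) := fun _ _ => rfl
        rw [show (∑ i ∈ range m, 2 ^ (m - 1 - i)) = ∑ j ∈ range m, 2 ^ j from this, sum_two_pow]
        exact Nat.sub_le _ _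


noncomputable def infl (j : ℕ) (F : PowerSeries ℚ) : PowerSeries ℚ :=
  PowerSeries.mk fun m => if j ∣ m then PowerSeries.coeff (m / j) F else 0

lemma coeff_infl (j m : ℕ) (F : PowerSeries ℚ) :
    coeff m (infl j F) = if j ∣ m then coeff (m / j) F else 0 := by
  rw [infl, coeff_mk]

lemma infl_one (j : ℕ) (hj : 0 < j) : infl j 1 = 1 := by
  ext m
  rw [coeff_infl]
  rcases Nat.eq_zero_or_pos m with rfl | hm
  · simp
  · have h2 : coeff m (1 : PowerSeries ℚ) = 0 := by
      rw [PowerSeries.coeff_one, if_neg hm.ne']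
    rw [h2]
    split_ifs with h
    · rw [PowerSeries.coeff_one, if_neg]
      exact (Nat.div_pos (Nat.le_of_dvd hm h) hj).ne'
    · rfl

lemma infl_mul (j : ℕ) (hj : 0 < j) (F G : PowerSeries ℚ) :
    infl j (F * G) = infl j F * infl j G := by
  ext m
  rw [PowerSeries.coeff_mul, coeff_infl]
  by_cases hm : j ∣ m
  · obtain ⟨q, rfl⟩ := hm
    rw [if_pos ⟨q, rfl⟩, Nat.mul_div_cancel_left q hj, PowerSeries.coeff_mul]
    rw [← Finset.sum_filter_of_ne (s := antidiagonal (j * q))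
      (p := fun p => j ∣ p.1 ∧ j ∣ p.2)
      (f := fun p => coeff p.1 (infl j F) * coeff p.2 (infl j G))
      (by
        rintro ⟨a, b⟩ _ hne
        by_contra hc
        rw [not_and_or] at hc
        rcases hc with hc | hc <;> simp [coeff_infl, hc] at hne)]
    apply Finset.sum_nbij' (i := fun p => (j * p.1, j * p.2)) (j := fun p => (p.1 / j, p.2 / j))
    · rintro ⟨a, b⟩ hab
      rw [Finset.HasAntidiagonal.mem_antidiagonal] at hab
      subst hab
      simp only [Finset.mem_filter, Finset.HasAntidiagonal.mem_antidiagonal]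
      exact ⟨(Nat.mul_add j a b).symm, Dvd.intro a rfl, Dvd.intro b rfl⟩
    · rintro ⟨a, b⟩ hab
      simp only [Finset.mem_filter, Finset.HasAntidiagonal.mem_antidiagonal] at hab
      obtain ⟨hsum, ⟨u, rfl⟩, ⟨v, rfl⟩⟩ := hab
      rw [Finset.HasAntidiagonal.mem_antidiagonal]
      simp only [Nat.mul_div_cancel_left _ hj]
      have : j * u + j * v = j * (u + v) := (Nat.mul_add j u v).symm
      rw [this] at hsum
      exact Nat.eq_of_mul_eq_mul_left hj hsum
    · rintro ⟨a, b⟩ _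
      simp [Nat.mul_div_cancel_left _ hj]
    · rintro ⟨a, b⟩ hab
      simp only [Finset.mem_filter, Finset.HasAntidiagonal.mem_antidiagonal] at hab
      obtain ⟨hsum, ⟨u, rfl⟩, ⟨v, rfl⟩⟩ := hab
      simp [Nat.mul_div_cancel_left _ hj]
    · rintro ⟨a, b⟩ _
      simp [coeff_infl, Nat.mul_div_cancel_left _ hj, Dvd.intro a rfl, Dvd.intro b rfl]
  · rw [if_neg hm]
    symm
    apply Finset.sum_eq_zero
    rintro ⟨a, b⟩ hab
    rw [Finset.HasAntidiagonal.mem_antidiagonal] at hab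
    rcases (em (j ∣ a)) with ha | ha
    · have hb : ¬ j ∣ b := fun hb => hm (hab ▸ Nat.dvd_add ha hb)
      simp [coeff_infl, ha, hb]
    · simp [coeff_infl, ha]

lemma infl_pow (j : ℕ) (hj : 0 < j) (F : PowerSeries ℚ) (k : ℕ) :
    infl j (F ^ k) = infl j F ^ k := by
  induction k with
  | zero => simpa using infl_one j hj
  | succ k ih => rw [pow_succ, infl_mul j hj, ih, pow_succ]

lemma infl_one_sub_X (j : ℕ) (hj : 0 < j) : infl j (1 - X) = 1 - X ^ j := by
  ext m
  rw [coeff_infl]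
  simp only [map_sub, PowerSeries.coeff_one, PowerSeries.coeff_X, coeff_X_pow]
  by_cases hdvd : j ∣ m
  · obtain ⟨q, rfl⟩ := hdvd
    rw [if_pos ⟨q, rfl⟩, Nat.mul_div_cancel_left q hj]
    have h1 : j * q = j ↔ q = 1 := by
      constructor
      · intro h; exact Nat.eq_of_mul_eq_mul_left hj (by omega)
      · rintro rfl; exact Nat.mul_one j
    have h2 : j * q = 0 ↔ q = 0 := by
      constructor
      · intro h; exact (Nat.mul_eq_zero.mp h).resolve_left hj.ne'
      · rintro rfl; exact Nat.mul_zero j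
    simp only [h1, h2]
  · rw [if_neg hdvd]
    have hm0 : m ≠ 0 := by rintro rfl; exact hdvd (Dvd.intro 0 rfl)
    have hmj : m ≠ j := by rintro rfl; exact hdvd dvd_rfl
    rw [if_neg hm0, if_neg hmj]
    exact (sub_self 0).symm

noncomputable def Bser (e j : ℕ) : PowerSeries ℚ :=
  PowerSeries.mk fun m => if j ∣ m then ((e - 1 + m / j).choose (e - 1) : ℚ) else 0

lemma Bser_mul (e j : ℕ) (he : 0 < e) (hj : 0 < j) :
    Bser e j * (1 - X ^ j) ^ e = 1 := by
  have h0 : (PowerSeries.mk fun m => ((e - 1 + m).choose (e - 1) : ℚ)) * (1 - X) ^ e = 1 := by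
    obtain ⟨c, rfl⟩ : ∃ c, e = c + 1 := ⟨e - 1, (Nat.succ_pred_eq_of_pos he).symm⟩
    simpa using mk_add_choose_mul_one_sub_pow_eq_one (S := ℚ) (d := c)
  have h1 : Bser e j = infl j (PowerSeries.mk fun m => ((e - 1 + m).choose (e - 1) : ℚ)) := by
    ext m
    rw [Bser, coeff_mk, coeff_infl]
    split_ifs with h
    · rw [coeff_mk]
    · rfl
  rw [h1, ← infl_one_sub_X j hj, ← infl_pow j hj, ← infl_mul j hj, h0, infl_one j hj]

lemma coeff_eq_of_mul_eq (N : ℕ) (A B F : PowerSeries ℚ) (hF : constantCoeff F = 1)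
    (h : ∀ k, k ≤ N → coeff k (A * F) = coeff k (B * F)) :
    ∀ k, k ≤ N → coeff k A = coeff k B := by
  intro k
  induction k using Nat.strong_induction_on with
  | _ k ih =>
    intro hk
    have h2 : ∑ q ∈ antidiagonal k,
        (coeff q.1 A - coeff q.1 B) * coeff q.2 F = 0 := by
      simp only [sub_mul, Finset.sum_sub_distrib]
      rw [← PowerSeries.coeff_mul, ← PowerSeries.coeff_mul, h k hk, sub_self]
    rw [Finset.sum_eq_single (k, 0)] at h2
    · have : coeff 0 F = 1 := by rwa [PowerSeries.coeff_zero_eq_constantCoeff]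
      rw [this, mul_one, sub_eq_zero] at h2
      exact h2
    · rintro ⟨a, b⟩ hab hne
      rw [Finset.HasAntidiagonal.mem_antidiagonal] at hab
      have ha : a < k := by
        by_contra h'
        push_neg at h'
        have h1 : a = k := by omega
        have h2 : b = 0 := by omega
        exact hne (by rw [h1, h2])
      rw [ih a ha (le_trans ha.le hk), sub_self, zero_mul]
    · intro hmem
      exact absurd (Finset.HasAntidiagonal.mem_antidiagonal.mpr (Nat.add_zero k)) hmem

lemma constantCoeff_prod_one (N : ℕ) (D : ℕ) :
    constantCoeff (∏ j ∈ Icc 1 N, (1 - (X : PowerSeries ℚ) ^ j) ^ (j ^ D)) = 1 := by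
  rw [map_prod]
  apply Finset.prod_eq_one
  intro j hj
  rw [Finset.mem_Icc] at hj
  rw [map_pow, map_sub, map_one, map_pow, constantCoeff_X, zero_pow (by omega), sub_zero, one_pow]


lemma one_add_pow_le (n D : ℕ) (hD : 2 * n ^ 2 ≤ 2 ^ D) :
    (1 + (n : ℚ) / 2 ^ D) ^ n ≤ 2 := by
  rcases Nat.eq_zero_or_pos n with rfl | hn
  · norm_num
  set x : ℚ := (n : ℚ) / 2 ^ D with hxdef
  have h2D : (0:ℚ) < 2 ^ D := by positivity
  have hx0 : 0 ≤ x := by positivity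
  have hnx : (n : ℚ) * x ≤ 1 / 2 := by
    rw [hxdef, mul_div_assoc']
    rw [div_le_div_iff₀ h2D (by norm_num)]
    have : ((n:ℚ) * n) * 2 = ((2 * n ^ 2 : ℕ) : ℚ) := by push_cast; ring
    rw [this]
    have : ((2 * n ^ 2 : ℕ) : ℚ) ≤ ((2 ^ D : ℕ) : ℚ) := by exact_mod_cast hD
    calc ((2 * n ^ 2 : ℕ) : ℚ) ≤ ((2 ^ D : ℕ) : ℚ) := this
    _ = 1 * 2 ^ D := by push_cast; ring
  have hx1 : x ≤ 1 := by
    rw [hxdef, div_le_one h2D]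
    have h1 : (n : ℚ) ≤ (n:ℚ) * (n:ℚ) * 2 := by
      have : (1:ℚ) ≤ n := by exact_mod_cast hn
      nlinarith
    have h2 : ((n:ℚ)) * n * 2 ≤ 2 ^ D := by
      have : ((2 * n ^ 2 : ℕ) : ℚ) ≤ ((2 ^ D : ℕ) : ℚ) := by exact_mod_cast hD
      push_cast at this
      nlinarith [this]
    linarith
  have hber : 1 - (n:ℚ) * x ≤ (1 - x) ^ n := by
    have := one_add_mul_le_pow (a := -x) (by linarith) n
    calc 1 - (n:ℚ) * x = 1 + n * (-x) := by ring
    _ ≤ (1 + -x) ^ n := this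
    _ = (1 - x) ^ n := by ring_nf
  have hpownn : (0:ℚ) ≤ (1 + x) ^ n := by positivity
  have hsq : ((1 - x) * (1 + x)) ^ n ≤ 1 := by
    have h1 : (1 - x) * (1 + x) = 1 - x ^ 2 := by ring
    rw [h1]
    apply pow_le_one₀ <;> nlinarith
  calc (1 + x) ^ n = 2 * ((1/2) * (1 + x) ^ n) := by ring
  _ ≤ 2 * ((1 - (n:ℚ) * x) * (1 + x) ^ n) := by
      apply mul_le_mul_of_nonneg_left _ (by norm_num)
      apply mul_le_mul_of_nonneg_right (by linarith) hpownn
  _ ≤ 2 * ((1 - x) ^ n * (1 + x) ^ n) := by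
      apply mul_le_mul_of_nonneg_left _ (by norm_num)
      apply mul_le_mul_of_nonneg_right hber hpownn
  _ = 2 * ((1 - x) * (1 + x)) ^ n := by rw [mul_pow]
  _ ≤ 2 * 1 := by nlinarith [hsq]
  _ = 2 := by norm_num

lemma factorial_le_pow_pred : ∀ a : ℕ, a.factorial ≤ a ^ (a - 1)
  | 0 => by norm_num
  | 1 => by norm_num
  | (a + 2) => by
      calc (a + 2).factorial = (a + 2) * (a + 1).factorial := rfl
      _ ≤ (a + 2) * (a + 1) ^ a := Nat.mul_le_mul_left _ (by
          simpa using factorial_le_pow_pred (a + 1))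
      _ ≤ (a + 2) * (a + 2) ^ a :=
          Nat.mul_le_mul_left _ (Nat.pow_le_pow_left (by omega) a)
      _ = (a + 2) ^ (a + 1) := by rw [pow_succ]; ring
      _ = (a + 2) ^ (a + 2 - 1) := by norm_num

lemma key_exp (n a D : ℕ) (ha : 2 ≤ a) (hn : n = 3 * a + 1)
    (hDlog : 2*(n:ℝ)*Real.log 2 + (2*(n:ℝ)/3) * Real.log a ≤ (D:ℝ) * Real.log (9/8)) :
    2 ^ (2*n+2) * ((a.factorial : ℝ))^2 * 8 ^ D < 9 ^ D := by
  have ha0 : (0:ℝ) < a := by positivity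
  have ha1 : (1:ℝ) < a := by exact_mod_cast Nat.lt_of_lt_of_le one_lt_two ha
  have hA : ((9:ℝ)/8) ^ D = Real.exp ((D:ℝ) * Real.log (9/8)) := by
    rw [← Real.log_pow, Real.exp_log (by positivity)]
  have hB : Real.exp (2*(n:ℝ)*Real.log 2 + (2*(n:ℝ)/3)*Real.log a) ≤ ((9:ℝ)/8)^D := by
    rw [hA]
    exact Real.exp_le_exp.mpr hDlog
  have hC : Real.exp (2*(n:ℝ)*Real.log 2) = 2 ^ (2*n) := by
    rw [show 2*(n:ℝ) = ((2*n : ℕ):ℝ) by push_cast; ring, ← Real.log_pow,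
      Real.exp_log (by positivity)]
  have hD2 : Real.exp ((2*(n:ℝ)/3)*Real.log a) = (a:ℝ) ^ ((2*(n:ℝ)/3) : ℝ) := by
    rw [Real.rpow_def_of_pos ha0, mul_comm]
  have hsplit : (a:ℝ) ^ ((2*(n:ℝ)/3) : ℝ) = (a:ℝ)^(2*a) * (a:ℝ) ^ ((2:ℝ)/3) := by
    rw [show ((2*(n:ℝ)/3) : ℝ) = ((2*a : ℕ):ℝ) + 2/3 by subst hn; push_cast; ring,
      Real.rpow_add ha0, Real.rpow_natCast]
  have hchain : (2:ℝ)^(2*n) * ((a:ℝ)^(2*a) * (a:ℝ)^((2:ℝ)/3)) ≤ ((9:ℝ)/8)^D := by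
    calc (2:ℝ)^(2*n) * ((a:ℝ)^(2*a) * (a:ℝ)^((2:ℝ)/3))
        = Real.exp (2*(n:ℝ)*Real.log 2) * Real.exp ((2*(n:ℝ)/3)*Real.log a) := by
          rw [hC, hD2, hsplit]
    _ = Real.exp (2*(n:ℝ)*Real.log 2 + (2*(n:ℝ)/3)*Real.log a) := (Real.exp_add _ _).symm
    _ ≤ ((9:ℝ)/8)^D := hB
  have hfact : ((a.factorial : ℝ))^2 ≤ (a:ℝ)^(2*(a-1)) := by
    have h1 : ((a.factorial : ℕ) : ℝ) ≤ ((a ^ (a-1) : ℕ) : ℝ) := by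
      exact_mod_cast factorial_le_pow_pred a
    push_cast at h1
    calc ((a.factorial : ℝ))^2 ≤ ((a:ℝ)^(a-1))^2 := by
          apply pow_le_pow_left₀ (by positivity) h1
    _ = (a:ℝ)^(2*(a-1)) := by rw [← pow_mul, Nat.mul_comm]
  have hpow_pos : (0:ℝ) < (a:ℝ)^(2*(a-1)) := by positivity
  have h23 : (1:ℝ) < (a:ℝ) ^ ((2:ℝ)/3) := by
    rw [Real.one_lt_rpow_iff_of_pos ha0]
    left; exact ⟨ha1, by norm_num⟩
  have hsq : (4:ℝ) ≤ (a:ℝ)^2 := by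
    have : (2:ℝ) ≤ a := by exact_mod_cast ha
    nlinarith
  have hsplit2 : (a:ℝ)^(2*a) = (a:ℝ)^(2*(a-1)) * (a:ℝ)^2 := by
    rw [← pow_add]; congr 1; omega
  have hmain : 2 ^ (2*n+2) * ((a.factorial : ℝ))^2 < ((9:ℝ)/8)^D := by
    calc (2:ℝ) ^ (2*n+2) * ((a.factorial : ℝ))^2
        ≤ (2:ℝ)^(2*n+2) * (a:ℝ)^(2*(a-1)) := by
          apply mul_le_mul_of_nonneg_left hfact (by positivity)
    _ = (2:ℝ)^(2*n) * (4 * (a:ℝ)^(2*(a-1))) := by rw [pow_add]; ring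
    _ ≤ (2:ℝ)^(2*n) * ((a:ℝ)^2 * (a:ℝ)^(2*(a-1))) := by
          apply mul_le_mul_of_nonneg_left _ (by positivity)
          apply mul_le_mul_of_nonneg_right hsq (le_of_lt hpow_pos)
    _ = (2:ℝ)^(2*n) * ((a:ℝ)^(2*a) * 1) := by rw [hsplit2]; ring
    _ < (2:ℝ)^(2*n) * ((a:ℝ)^(2*a) * (a:ℝ)^((2:ℝ)/3)) := by
          apply mul_lt_mul_of_pos_left _ (by positivity)
          apply mul_lt_mul_of_pos_left h23 (by positivity)
    _ ≤ ((9:ℝ)/8)^D := hchain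
  have h8 : (0:ℝ) < 8 ^ D := by positivity
  rw [← lt_div_iff₀ h8]
  calc (2:ℝ) ^ (2*n+2) * ((a.factorial : ℝ))^2 < ((9:ℝ)/8)^D := hmain
  _ = 9^D / 8^D := div_pow 9 8 D


lemma pn_sum_le (D N n : ℕ) (hn : 1 ≤ n) (hN : n ≤ N) (hD : 2 * n ^ 2 ≤ 2 ^ D) :
    ∑ l ∈ finsuppAntidiag (Icc 1 N) n, ∏ j ∈ Icc 1 N,
      (if j ∣ l j then (((j ^ D - 1 + l j / j).choose (j ^ D - 1) : ℕ) : ℚ) else 0)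
      ≤ 2 ^ n * ((Mf n : ℚ) ^ D * 2) := by
  have h2D : (0:ℚ) < 2 ^ D := by positivity
  set x : ℚ := (n:ℚ)/2^D with hxdef
  have hx0 : (0:ℚ) ≤ x := by positivity
  have hx2 : (1 + x) ^ n ≤ 2 := one_add_pow_le n D hD
  have hterm : ∀ l ∈ Tset N n, (∏ j ∈ Icc 1 N,
      (if j ∣ l j then (((j ^ D - 1 + l j / j).choose (j ^ D - 1) : ℕ) : ℚ) else 0))
      ≤ (Mf n : ℚ) ^ D * 2 := by
    intro l hl
    rw [Tset, mem_filter, mem_finsuppAntidiag] at hl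
    obtain ⟨⟨hsum, hsupp⟩, hdvd⟩ := hl
    have hlj_le : ∀ j ∈ Icc 1 N, l j ≤ n := by
      intro j hj
      rw [← hsum]
      exact Finset.single_le_sum (fun i _ => Nat.zero_le (l i)) hj
    have h1N : (1:ℕ) ∈ Icc 1 N := mem_Icc.mpr ⟨le_rfl, hn.trans hN⟩
    have hfeq : (∏ j ∈ Icc 1 N,
        (if j ∣ l j then (((j ^ D - 1 + l j / j).choose (j ^ D - 1) : ℕ) : ℚ) else 0))
        = ∏ j ∈ Icc 1 N, (((j ^ D - 1 + l j / j).choose (j ^ D - 1) : ℕ) : ℚ) :=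
      Finset.prod_congr rfl fun j hj => if_pos (hdvd j hj)
    rw [hfeq, ← Finset.mul_prod_erase _ _ h1N]
    have hf1 : (((1 ^ D - 1 + l 1 / 1).choose (1 ^ D - 1) : ℕ) : ℚ) = 1 := by
      norm_num
    rw [hf1, one_mul]
    set s' := (Icc 1 N).erase 1 with hs'def
    have hj2 : ∀ j ∈ s', 2 ≤ j := by
      intro j hj
      have h1 := Finset.mem_erase.mp hj
      have h2 := mem_Icc.mp h1.2
      omega
    have hs'Icc : s' ⊆ Icc 1 N := Finset.erase_subset _ _
    have hsum' : ∑ j ∈ s', l j ≤ n := by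
      rw [← hsum]
      exact Finset.sum_le_sum_of_subset hs'Icc
    -- step 1: per-factor bound
    have hstep1 : ∏ j ∈ s', (((j ^ D - 1 + l j / j).choose (j ^ D - 1) : ℕ) : ℚ)
        ≤ ∏ j ∈ s', ((j:ℚ)^D * (1 + x)) ^ (l j / j) := by
      apply Finset.prod_le_prod (fun j _ => by positivity)
      intro j hj
      set g := l j / j with hgdef
      have hgn : g ≤ n := le_trans (Nat.div_le_self _ _) (hlj_le j (hs'Icc hj))
      have hchoose : ((j ^ D - 1 + g).choose (j ^ D - 1) : ℕ) ≤ (j ^ D - 1 + g) ^ g := by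
        have hcs := Nat.choose_symm (Nat.le_add_right (j ^ D - 1) g)
        rw [Nat.add_sub_cancel_left] at hcs
        rw [← hcs]
        exact Nat.choose_le_pow _ _
      have hjD : (2:ℚ)^D ≤ (j:ℚ)^D := by
        have : (2:ℕ)^D ≤ j^D := Nat.pow_le_pow_left (hj2 j hj) D
        exact_mod_cast this
      have hbase : ((j ^ D - 1 + g : ℕ) : ℚ) ≤ (j:ℚ)^D * (1 + x) := by
        have h1 : ((j ^ D - 1 + g : ℕ) : ℚ) ≤ ((j ^ D + g : ℕ) : ℚ) := by
          exact_mod_cast Nat.add_le_add_right (Nat.sub_le _ _) g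
        have h2 : ((j ^ D + g : ℕ) : ℚ) = (j:ℚ)^D + g := by push_cast; ring
        have h3 : (g:ℚ) ≤ (j:ℚ)^D * x := by
          calc (g:ℚ) ≤ (n:ℚ) := by exact_mod_cast hgn
          _ = 2^D * x := by rw [hxdef]; field_simp
          _ ≤ (j:ℚ)^D * x := mul_le_mul_of_nonneg_right hjD hx0
        calc ((j ^ D - 1 + g : ℕ) : ℚ) ≤ (j:ℚ)^D + g := h2 ▸ h1
        _ ≤ (j:ℚ)^D + (j:ℚ)^D * x := by linarith
        _ = (j:ℚ)^D * (1 + x) := by ring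
      calc (((j ^ D - 1 + g).choose (j ^ D - 1) : ℕ) : ℚ)
          ≤ (((j ^ D - 1 + g) ^ g : ℕ) : ℚ) := by exact_mod_cast hchoose
      _ = (((j ^ D - 1 + g : ℕ) : ℚ)) ^ g := by push_cast; ring
      _ ≤ ((j:ℚ)^D * (1 + x)) ^ g := pow_le_pow_left₀ (by positivity) hbase g
    -- step 2: split the product
    have hstep2 : ∏ j ∈ s', ((j:ℚ)^D * (1 + x)) ^ (l j / j)
        = (∏ j ∈ s', (j:ℚ) ^ (l j / j)) ^ D * (1 + x) ^ (∑ j ∈ s', l j / j) := by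
      simp only [mul_pow]
      rw [Finset.prod_mul_distrib]
      congr 1
      · rw [← Finset.prod_pow]
        apply Finset.prod_congr rfl
        intro j _
        rw [← pow_mul, ← pow_mul, Nat.mul_comm]
      · exact Finset.prod_pow_eq_pow_sum s' _ _
    -- step 3: product of parts bound
    have hstep3 : (∏ j ∈ s', (j:ℚ) ^ (l j / j)) ≤ (Mf n : ℚ) := by
      have hnat : (∏ j ∈ s', j ^ (l j / j)) ≤ Mf n := by
        calc (∏ j ∈ s', j ^ (l j / j)) ≤ Mf (∑ j ∈ s', j * (l j / j)) := Mf_prod s' _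
        _ ≤ Mf n := by
            apply Mf_monotone
            calc (∑ j ∈ s', j * (l j / j)) = ∑ j ∈ s', l j := by
                  apply Finset.sum_congr rfl
                  intro j hj
                  exact Nat.mul_div_cancel' (hdvd j (hs'Icc hj))
            _ ≤ n := hsum'
      calc (∏ j ∈ s', (j:ℚ) ^ (l j / j)) = (((∏ j ∈ s', j ^ (l j / j)) : ℕ) : ℚ) := by
            push_cast; ring
      _ ≤ (Mf n : ℚ) := by exact_mod_cast hnat
    have hstep4 : (1 + x) ^ (∑ j ∈ s', l j / j) ≤ 2 := by
      calc (1 + x) ^ (∑ j ∈ s', l j / j) ≤ (1 + x) ^ n := by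
            apply pow_le_pow_right₀ (by linarith)
            calc (∑ j ∈ s', l j / j) ≤ ∑ j ∈ s', l j :=
                  Finset.sum_le_sum fun j _ => Nat.div_le_self _ _
            _ ≤ n := hsum'
      _ ≤ 2 := hx2
    calc ∏ j ∈ s', (((j ^ D - 1 + l j / j).choose (j ^ D - 1) : ℕ) : ℚ)
        ≤ ∏ j ∈ s', ((j:ℚ)^D * (1 + x)) ^ (l j / j) := hstep1
    _ = (∏ j ∈ s', (j:ℚ) ^ (l j / j)) ^ D * (1 + x) ^ (∑ j ∈ s', l j / j) := hstep2
    _ ≤ (Mf n : ℚ) ^ D * 2 := by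
        apply mul_le_mul _ hstep4 (by positivity) (by positivity)
        exact pow_le_pow_left₀ (Finset.prod_nonneg fun j _ => by positivity) hstep3 D
  have hfilter : ∑ l ∈ finsuppAntidiag (Icc 1 N) n, ∏ j ∈ Icc 1 N,
      (if j ∣ l j then (((j ^ D - 1 + l j / j).choose (j ^ D - 1) : ℕ) : ℚ) else 0)
      = ∑ l ∈ Tset N n, ∏ j ∈ Icc 1 N,
      (if j ∣ l j then (((j ^ D - 1 + l j / j).choose (j ^ D - 1) : ℕ) : ℚ) else 0) := by
    rw [Tset]
    symm
    apply Finset.sum_filter_of_ne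
    intro l _ hlne j hj
    by_contra hnd
    exact hlne (Finset.prod_eq_zero hj (if_neg hnd))
  rw [hfilter]
  calc ∑ l ∈ Tset N n, ∏ j ∈ Icc 1 N,
      (if j ∣ l j then (((j ^ D - 1 + l j / j).choose (j ^ D - 1) : ℕ) : ℚ) else 0)
      ≤ (Tset N n).card • ((Mf n : ℚ) ^ D * 2) := Finset.sum_le_card_nsmul _ _ _ hterm
  _ = ((Tset N n).card : ℚ) * ((Mf n : ℚ) ^ D * 2) := by rw [nsmul_eq_mul]
  _ ≤ 2 ^ n * ((Mf n : ℚ) ^ D * 2) := by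
      apply mul_le_mul_of_nonneg_right _ (by positivity)
      calc ((Tset N n).card : ℚ) ≤ ((2 ^ n : ℕ) : ℚ) := by exact_mod_cast Tset_card N n
      _ = 2 ^ n := by push_cast; ring

/-- `p : ℕ → ℚ` is the coefficient sequence of `∏_{n≥1} (1-q^n)^{-n^(d-1)}`. -/
def IsPdSeries (d : ℕ) (p : ℕ → ℚ) : Prop :=
  ∀ N k : ℕ, k ≤ N →
    (PowerSeries.coeff k) ((PowerSeries.mk p) *
      ∏ n ∈ Finset.Icc 1 N, (1 - (PowerSeries.X : PowerSeries ℚ) ^ n) ^ (n ^ (d - 1))) =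
    if k = 0 then 1 else 0

lemma p_eq (d : ℕ) (p : ℕ → ℚ) (hp : IsPdSeries d p) (N k : ℕ) (hk : k ≤ N) :
    p k = ∑ l ∈ finsuppAntidiag (Icc 1 N) k, ∏ j ∈ Icc 1 N,
      (if j ∣ l j then (((j ^ (d - 1) - 1 + l j / j).choose (j ^ (d - 1) - 1) : ℕ) : ℚ) else 0) := by
  set F := ∏ j ∈ Icc 1 N, (1 - (X : PowerSeries ℚ) ^ j) ^ (j ^ (d - 1)) with hFdef
  set G := ∏ j ∈ Icc 1 N, Bser (j ^ (d - 1)) j with hGdef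
  have hGF : G * F = 1 := by
    rw [hGdef, hFdef, ← Finset.prod_mul_distrib]
    apply Finset.prod_eq_one
    intro j hj
    rw [Finset.mem_Icc] at hj
    exact Bser_mul _ j (Nat.pow_pos (by omega)) (by omega)
  have hF0 : constantCoeff F = 1 := constantCoeff_prod_one N (d - 1)
  have key : coeff k (PowerSeries.mk p) = coeff k G := by
    apply coeff_eq_of_mul_eq N _ _ F hF0 _ k hk
    intro i hi
    rw [hp N i hi, hGF, PowerSeries.coeff_one]
  rw [← coeff_mk k p, key, hGdef, PowerSeries.coeff_prod]
  apply Finset.sum_congr rfl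
  intro l _
  apply Finset.prod_congr rfl
  intro j _
  rw [Bser, coeff_mk]


set_option maxHeartbeats 2000000 in
/-- Strict log-convexity of `p_d` at `n ≡ 1 (mod 3)`, `n ≥ 6`, for large `d`. -/
theorem pd_log_convex_mod_one (d : ℕ) (p : ℕ → ℚ) (hp : IsPdSeries d p)
    (n : ℕ) (hn : 6 ≤ n) (h3 : n % 3 = 1)
    (hd : (d : ℝ) ≥ 1 + 2 * (n : ℝ) * (Real.log 2 + Real.log (((n : ℝ) - 1) / 3) / 3) / Real.log (9 / 8)) :
    p n ^ 2 < p (n - 1) * p (n + 1) := by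
  obtain ⟨a, ha⟩ : ∃ a, n = 3 * a + 1 := ⟨n / 3, by omega⟩
  have ha2 : 2 ≤ a := by omega
  obtain ⟨b, hb⟩ : ∃ b, a = b + 1 := ⟨a - 1, by omega⟩
  -- log facts
  have hlog98pos : (0:ℝ) < Real.log (9/8) := Real.log_pos (by norm_num)
  have hlog98le : Real.log ((9:ℝ)/8) ≤ 1/8 := by
    have := Real.log_le_sub_one_of_pos (x := (9:ℝ)/8) (by norm_num)
    linarith
  have hlog2 : (0.6931:ℝ) ≤ Real.log 2 := by
    have := Real.log_two_gt_d9; linarith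
  have ha1R : (1:ℝ) ≤ (a:ℝ) := by exact_mod_cast Nat.one_le_of_lt ha2
  have hloga0 : (0:ℝ) ≤ Real.log a := Real.log_nonneg ha1R
  have hcast : ((n:ℝ) - 1)/3 = (a:ℝ) := by subst ha; push_cast; ring
  rw [hcast] at hd
  have hn0 : (0:ℝ) ≤ (n:ℝ) := by positivity
  -- d is large
  have hd11R : 11 * (n:ℝ) ≤ 2 * n * (Real.log 2 + Real.log a / 3) / Real.log (9/8) := by
    rw [le_div_iff₀ hlog98pos]
    nlinarith [mul_nonneg hn0 hloga0,
      mul_le_mul_of_nonneg_left hlog98le (by positivity : (0:ℝ) ≤ 11*(n:ℝ)),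
      mul_le_mul_of_nonneg_left hlog2 (by positivity : (0:ℝ) ≤ 2*(n:ℝ))]
  have hd11 : 11 * n + 1 ≤ d := by
    have : ((11 * n + 1 : ℕ) : ℝ) ≤ (d:ℝ) := by push_cast; linarith
    exact_mod_cast this
  have hd1 : 1 ≤ d := by omega
  set D := d - 1 with hDdef
  have hDcast : (D:ℝ) = (d:ℝ) - 1 := by
    rw [hDdef, Nat.cast_sub hd1, Nat.cast_one]
  have hD11 : 11 * n ≤ D := by omega
  have hDlog : 2*(n:ℝ)*Real.log 2 + (2*(n:ℝ)/3) * Real.log a ≤ (D:ℝ) * Real.log (9/8) := by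
    have h1 : 2*(n:ℝ)*(Real.log 2 + Real.log a/3)/Real.log (9/8) ≤ (d:ℝ) - 1 := by linarith
    rw [div_le_iff₀ hlog98pos] at h1
    rw [hDcast]
    nlinarith [h1]
  -- 2 n² ≤ 2 ^ D
  have h2n2 : 2 * n ^ 2 ≤ 2 ^ D := by
    have h1 : n < 2 ^ n := Nat.lt_two_pow_self
    have h2 : n ^ 2 < 2 ^ n * 2 ^ n := by
      calc n ^ 2 = n * n := sq n
      _ < 2 ^ n * 2 ^ n := Nat.mul_lt_mul'' h1 h1
    have h3' : 2 * n ^ 2 < 2 ^ (n + n + 1) := by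
      calc 2 * n ^ 2 < 2 * (2 ^ n * 2 ^ n) := by omega
      _ = 2 ^ (n + n + 1) := by rw [pow_succ, pow_add]; ring
    calc 2 * n ^ 2 ≤ 2 ^ (n + n + 1) := h3'.le
    _ ≤ 2 ^ D := Nat.pow_le_pow_right (by norm_num) (by omega)
  -- coefficient formulas
  set N := n + 1 with hNdef
  have hp1 := p_eq d p hp N (n - 1) (by omega)
  have hp2 := p_eq d p hp N n (by omega)
  have hp3 := p_eq d p hp N (n + 1) (by omega)
  rw [← hDdef] at hp1 hp2 hp3
  have htermnn : ∀ (l : ℕ →₀ ℕ), (0:ℚ) ≤ ∏ j ∈ Icc 1 N,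
      (if j ∣ l j then (((j ^ D - 1 + l j / j).choose (j ^ D - 1) : ℕ) : ℚ) else 0) :=
    fun l => Finset.prod_nonneg fun j _ => by positivity
  have h3mem : (3:ℕ) ∈ Icc 1 N := mem_Icc.mpr (by omega)
  have h2mem : (2:ℕ) ∈ Icc 1 N := mem_Icc.mpr (by omega)
  have h3Dpos : 1 ≤ 3 ^ D := Nat.one_le_pow _ _ (by norm_num)
  have h2Dpos : 1 ≤ 2 ^ D := Nat.one_le_pow _ _ (by norm_num)
  -- the key binomial coefficient
  set C : ℕ := (3 ^ D - 1 + a).choose (3 ^ D - 1) with hCdef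
  have hchooseC : ((3:ℚ)^D)^a / (a.factorial : ℚ) ≤ (C : ℚ) := by
    have hnat : (3 ^ D) ^ a ≤ a.factorial * C := by
      calc (3 ^ D) ^ a ≤ (3 ^ D).ascFactorial a := Nat.pow_succ_le_ascFactorial _ _
      _ = a.factorial * (3 ^ D + a - 1).choose a := Nat.ascFactorial_eq_factorial_mul_choose' _ _
      _ = a.factorial * (3 ^ D - 1 + a).choose a := by rw [show 3^D + a - 1 = 3^D - 1 + a by omega]
      _ = a.factorial * C := by
          rw [hCdef]
          congr 1
          have hcs := Nat.choose_symm (Nat.le_add_right (3 ^ D - 1) a)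
          rw [Nat.add_sub_cancel_left] at hcs
          rw [hcs]
    have hfpos : (0:ℚ) < (a.factorial : ℚ) := by exact_mod_cast a.factorial_pos
    rw [div_le_iff₀ hfpos]
    calc ((3:ℚ)^D)^a = (((3 ^ D) ^ a : ℕ) : ℚ) := by push_cast; ring
    _ ≤ ((a.factorial * C : ℕ) : ℚ) := by exact_mod_cast hnat
    _ = (C:ℚ) * (a.factorial : ℚ) := by push_cast; ring
  -- lower bound for p (n-1)
  have hlb1 : (C : ℚ) ≤ p (n - 1) := by
    rw [hp1]
    set l₁ : ℕ →₀ ℕ := Finsupp.single 3 (3 * a) with hl₁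
    have hmem : l₁ ∈ finsuppAntidiag (Icc 1 N) (n - 1) := by
      rw [mem_finsuppAntidiag]
      constructor
      · rw [Finset.sum_eq_single_of_mem 3 h3mem
          (fun j _ hj => Finsupp.single_eq_of_ne' (Ne.symm hj))]
        rw [Finsupp.single_eq_same]
        omega
      · exact subset_trans Finsupp.support_single_subset (by simpa using h3mem)
    have hterm : ∏ j ∈ Icc 1 N,
        (if j ∣ l₁ j then (((j ^ D - 1 + l₁ j / j).choose (j ^ D - 1) : ℕ) : ℚ) else 0)
        = (C : ℚ) := by
      rw [Finset.prod_eq_single_of_mem 3 h3mem]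
      · rw [Finsupp.single_eq_same, if_pos (Dvd.intro a rfl),
          Nat.mul_div_cancel_left a (by norm_num), hCdef]
      · intro j _ hj
        rw [Finsupp.single_eq_of_ne' (Ne.symm hj), if_pos (dvd_zero j),
          Nat.zero_div, Nat.add_zero, Nat.choose_self, Nat.cast_one]
    calc (C:ℚ) = _ := hterm.symm
    _ ≤ _ := Finset.single_le_sum (fun l _ => htermnn l) hmem
  -- lower bound for p (n+1)
  have hlb2 : ((2 ^ D : ℕ) : ℚ) * (C : ℚ) ≤ p (n + 1) := by
    rw [hp3]
    set l₂ : ℕ →₀ ℕ := Finsupp.single 3 (3 * a) + Finsupp.single 2 2 with hl₂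
    have hl₂3 : l₂ 3 = 3 * a := by
      rw [hl₂, Finsupp.add_apply, Finsupp.single_eq_same, Finsupp.single_eq_of_ne' (by norm_num)]
      omega
    have hl₂2 : l₂ 2 = 2 := by
      rw [hl₂, Finsupp.add_apply, Finsupp.single_eq_same, Finsupp.single_eq_of_ne' (by norm_num)]
    have hl₂other : ∀ j, j ≠ 2 → j ≠ 3 → l₂ j = 0 := by
      intro j hj2 hj3
      rw [hl₂, Finsupp.add_apply, Finsupp.single_eq_of_ne' (Ne.symm hj3),
        Finsupp.single_eq_of_ne' (Ne.symm hj2)]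
      omega
    have hmem : l₂ ∈ finsuppAntidiag (Icc 1 N) (n + 1) := by
      rw [mem_finsuppAntidiag]
      constructor
      · have h23 : ({2, 3} : Finset ℕ) ⊆ Icc 1 N := by
          intro j hj
          simp only [Finset.mem_insert, Finset.mem_singleton] at hj
          rcases hj with rfl | rfl
          exacts [h2mem, h3mem]
        rw [← Finset.sum_subset h23 (fun j _ hj => by
          simp only [Finset.mem_insert, Finset.mem_singleton, not_or] at hj
          exact hl₂other j hj.1 hj.2)]
        rw [show ({2, 3} : Finset ℕ) = insert 2 {3} from rfl,
          Finset.sum_insert (by norm_num), Finset.sum_singleton, hl₂2, hl₂3]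
        omega
      · rw [hl₂]
        refine subset_trans Finsupp.support_add ?_
        apply Finset.union_subset
        · exact subset_trans Finsupp.support_single_subset (by simpa using h3mem)
        · exact subset_trans Finsupp.support_single_subset (by simpa using h2mem)
    have hterm : ∏ j ∈ Icc 1 N,
        (if j ∣ l₂ j then (((j ^ D - 1 + l₂ j / j).choose (j ^ D - 1) : ℕ) : ℚ) else 0)
        = ((2 ^ D : ℕ) : ℚ) * (C : ℚ) := by
      have h23 : ({2, 3} : Finset ℕ) ⊆ Icc 1 N := by
        intro j hj
        simp only [Finset.mem_insert, Finset.mem_singleton] at hj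
        rcases hj with rfl | rfl
        exacts [h2mem, h3mem]
      rw [← Finset.prod_subset h23 (fun j _ hj => by
        simp only [Finset.mem_insert, Finset.mem_singleton, not_or] at hj
        rw [hl₂other j hj.1 hj.2, if_pos (dvd_zero j),
          Nat.zero_div, Nat.add_zero, Nat.choose_self, Nat.cast_one])]
      rw [show ({2, 3} : Finset ℕ) = insert 2 {3} from rfl,
        Finset.prod_insert (by norm_num), Finset.prod_singleton, hl₂2, hl₂3]
      rw [if_pos (dvd_refl 2), if_pos (Dvd.intro a rfl), Nat.div_self (by norm_num),
        Nat.mul_div_cancel_left a (by norm_num), ← hCdef]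
      congr 2
      rw [show 2 ^ D - 1 + 1 = 2 ^ D by omega]
      have hcs := Nat.choose_symm (show 2 ^ D - 1 ≤ 2 ^ D by omega)
      rw [show 2 ^ D - (2 ^ D - 1) = 1 by omega, Nat.choose_one_right] at hcs
      rw [← hcs]
    calc ((2 ^ D : ℕ) : ℚ) * (C : ℚ) = _ := hterm.symm
    _ ≤ _ := Finset.single_le_sum (fun l _ => htermnn l) hmem
  -- upper bound for p n
  have hub : p n ≤ 2 ^ n * ((Mf n : ℚ) ^ D * 2) := by
    rw [hp2]
    exact pn_sum_le D N n (by omega) (by omega) h2n2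
  have hMfn : (Mf n : ℚ) = ((4 * 3 ^ b : ℕ) : ℚ) := by
    rw [show n = 3 * b + 4 by omega, Mf_three_one]
  have hpn0 : (0:ℚ) ≤ p n := by
    rw [hp2]; exact Finset.sum_nonneg fun l _ => htermnn l
  -- pass to ℝ
  have hkey := key_exp n a D ha2 ha hDlog
  set F : ℝ := (a.factorial : ℝ) with hFdef
  have hF0 : (0:ℝ) < F := by rw [hFdef]; exact_mod_cast a.factorial_pos
  have hubR : (p n : ℝ) ≤ 2 ^ n * ((4 * 3 ^ b : ℝ) ^ D * 2) := by
    have h1 := hub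
    rw [hMfn] at h1
    have h2 := (Rat.cast_le (K := ℝ)).mpr h1
    push_cast at h2
    convert h2 using 2
  have hlbR1 : ((3:ℝ)^D)^a / F ≤ (p (n - 1) : ℝ) := by
    have h1 : (((3:ℚ)^D)^a / (a.factorial : ℚ) : ℚ) ≤ p (n - 1) := le_trans hchooseC hlb1
    have h2 := (Rat.cast_le (K := ℝ)).mpr h1
    push_cast at h2
    rw [hFdef]
    convert h2 using 2
  have hlbR2 : (2:ℝ)^D * (((3:ℝ)^D)^a / F) ≤ (p (n + 1) : ℝ) := by
    have h1 : ((2 ^ D : ℕ) : ℚ) * (((3:ℚ)^D)^a / (a.factorial : ℚ)) ≤ p (n + 1) := by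
      calc ((2 ^ D : ℕ) : ℚ) * (((3:ℚ)^D)^a / (a.factorial : ℚ))
          ≤ ((2 ^ D : ℕ) : ℚ) * (C : ℚ) := by
            apply mul_le_mul_of_nonneg_left hchooseC (by positivity)
      _ ≤ p (n + 1) := hlb2
    have h2 := (Rat.cast_le (K := ℝ)).mpr h1
    push_cast at h2
    rw [hFdef]
    convert h2 using 2
  have hpn0R : (0:ℝ) ≤ (p n : ℝ) := by exact_mod_cast hpn0
  -- final algebra in ℝ
  have hGpos : (0:ℝ) < (3:ℝ)^(2*b*D) * (2:ℝ)^D := by positivity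
  have hmul := mul_lt_mul_of_pos_right hkey hGpos
  have hfinalR : ((p n : ℝ))^2 < (p (n - 1) : ℝ) * (p (n + 1) : ℝ) := by
    have hLHS : ((p n : ℝ))^2 ≤ (2 ^ n * ((4 * 3 ^ b : ℝ) ^ D * 2))^2 :=
      pow_le_pow_left₀ hpn0R hubR 2
    have hRHS : (((3:ℝ)^D)^a / F) * ((2:ℝ)^D * (((3:ℝ)^D)^a / F))
        ≤ (p (n - 1) : ℝ) * (p (n + 1) : ℝ) := by
      apply mul_le_mul hlbR1 hlbR2 (by positivity) (le_trans (by positivity) hlbR1)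
    have hmid : (2 ^ n * ((4 * 3 ^ b : ℝ) ^ D * 2))^2
        < (((3:ℝ)^D)^a / F) * ((2:ℝ)^D * (((3:ℝ)^D)^a / F)) := by
      have e8 : ((2:ℝ)^D)^3 = 8^D := by
        rw [show (8:ℝ) = 2^3 by norm_num, ← pow_mul', pow_mul]
      have e9 : ((3:ℝ)^D)^2 = 9^D := by
        rw [show (9:ℝ) = 3^2 by norm_num, ← pow_mul', pow_mul]
      have e2 : ((2:ℝ)^n)^2*4 = (2:ℝ)^(2*n+2) := by
        rw [← pow_mul', pow_add]
        norm_num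
      have e3 : ((4 * 3 ^ b : ℝ))^D = ((2:ℝ)^D)^2 * ((3:ℝ)^D)^b := by
        rw [mul_pow]
        congr 1
        · rw [show (4:ℝ) = 2^2 by norm_num, ← pow_mul, pow_mul']
        · rw [← pow_mul, pow_mul']
      have hkey2 : ((2:ℝ)^n)^2*4*F^2*((2:ℝ)^D)^3 < ((3:ℝ)^D)^2 := by
        rw [e8, e9]
        calc ((2:ℝ)^n)^2*4*F^2*(8:ℝ)^D = ((2:ℝ)^n)^2*4*(F^2*(8:ℝ)^D) := by ring
        _ = (2:ℝ)^(2*n+2)*(F^2*(8:ℝ)^D) := by rw [e2]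
        _ = (2:ℝ)^(2*n+2)*F^2*(8:ℝ)^D := by ring
        _ < (9:ℝ)^D := hkey
      have hRHSeq : (((3:ℝ)^D)^a / F) * ((2:ℝ)^D * (((3:ℝ)^D)^a / F))
          = (2:ℝ)^D * ((3:ℝ)^D)^(2*a) / F^2 := by
        field_simp
        ring
      rw [hRHSeq, lt_div_iff₀ (by positivity : (0:ℝ) < F^2), e3, hb]
      set x := (3:ℝ)^D with hx
      set y := (2:ℝ)^D with hy
      set q := (2:ℝ)^n with hq
      have hx0 : (0:ℝ) < x := by rw [hx]; positivity
      have hy0 : (0:ℝ) < y := by rw [hy]; positivity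
      have hq0 : (0:ℝ) < q := by rw [hq]; positivity
      have hpos : (0:ℝ) < y * x^(2*b) := by positivity
      clear_value x y q
      calc (q * (y^2 * x^b * 2))^2 * F^2
          = (q^2*4*F^2*y^3) * (y * x^(2*b)) := by ring
      _ < x^2 * (y * x^(2*b)) := mul_lt_mul_of_pos_right hkey2 hpos
      _ = y * x^(2*(b+1)) := by ring
    calc ((p n : ℝ))^2 ≤ _ := hLHS
    _ < _ := hmid
    _ ≤ _ := hRHS
  exact_mod_cast hfinalR
end

section
/- For every d ≥ 1 one has p_d(5) = 6^{d-1} + 5^{d-1} + p_d(4), where p_d(4) = (3/2)·4^{d-1} + 3^{d-1} + (3/2)·2^{d-1} + 1. -/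
open PowerSeries Finset

lemma coeff_osp (m s k : ℕ) (hm : 0 < m) :
    PowerSeries.coeff k ((1 - (PowerSeries.X : PowerSeries ℚ) ^ m) ^ s) =
    if m ∣ k then (-1 : ℚ)^(k/m) * (s.choose (k/m) : ℚ) else 0 := by
  have h1 : ((1 : PowerSeries ℚ) - X ^ m) ^ s
      = ∑ j ∈ Finset.range (s+1), PowerSeries.C ((-1)^j * (s.choose j : ℚ)) * X ^ (m*j) := by
    rw [sub_eq_add_neg, add_comm, add_pow]
    refine Finset.sum_congr rfl fun j hj => ?_
    rw [one_pow, mul_one, neg_pow, ← pow_mul, map_mul, map_pow, map_neg, map_one]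
    rw [map_natCast]
    ring
  rw [h1, map_sum]
  simp only [PowerSeries.coeff_C_mul, PowerSeries.coeff_X_pow]
  by_cases hdvd : m ∣ k
  · obtain ⟨j0, rfl⟩ := hdvd
    rw [Nat.mul_div_cancel_left _ hm]
    by_cases hle : j0 ≤ s
    · rw [Finset.sum_eq_single j0]
      · simp
      · intro j hj hne
        simp [Nat.mul_left_cancel_iff hm, (Ne.symm hne)]
      · intro h; exact absurd (Finset.mem_range.mpr (Nat.lt_succ_of_le hle)) h
    · rw [Finset.sum_eq_zero, if_pos (dvd_mul_right m j0)]
      · rw [Nat.choose_eq_zero_of_lt (Nat.lt_of_not_le hle)]; simp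
      · intro j hj
        have : j ≠ j0 := fun h => hle (h ▸ Nat.lt_succ_iff.mp (Finset.mem_range.mp hj))
        simp [Nat.mul_left_cancel_iff hm, Ne.symm this]
  · rw [if_neg hdvd, Finset.sum_eq_zero]
    intro j hj
    have : k ≠ m * j := fun h => hdvd (h ▸ dvd_mul_right m j)
    simp [this]

set_option maxHeartbeats 1600000 in
/-- `p_d(5) = 6^(d-1) + 5^(d-1) + p_d(4)`. -/
theorem pd_five (d : ℕ) (hd : 1 ≤ d) (p : ℕ → ℚ) (hp : IsPdSeries d p) :
    p 5 = (6 : ℚ) ^ (d - 1) + (5 : ℚ) ^ (d - 1) + p 4 ∧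
    p 4 = (3 / 2) * (4 : ℚ) ^ (d - 1) + (3 : ℚ) ^ (d - 1) + (3 / 2) * (2 : ℚ) ^ (d - 1) + 1 := by
  have hF : (∏ n ∈ Finset.Icc 1 5, (1 - (PowerSeries.X : PowerSeries ℚ) ^ n) ^ (n ^ (d - 1)))
      = (1 - X^1) ^ 1 * (1 - X^2) ^ (2 ^ (d-1)) * (1 - X^3) ^ (3 ^ (d-1))
        * (1 - X^4) ^ (4 ^ (d-1)) * (1 - X^5) ^ (5 ^ (d-1)) := by
    rw [show (5:ℕ) = 4 + 1 from rfl, Finset.prod_Icc_succ_top (by norm_num),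
        show (4:ℕ) = 3 + 1 from rfl, Finset.prod_Icc_succ_top (by norm_num),
        show (3:ℕ) = 2 + 1 from rfl, Finset.prod_Icc_succ_top (by norm_num),
        show (2:ℕ) = 1 + 1 from rfl, Finset.prod_Icc_succ_top (by norm_num),
        Finset.Icc_self, Finset.prod_singleton]
    norm_num [one_pow]
  have hkey : ∀ k, k ≤ 5 → (PowerSeries.coeff k) ((PowerSeries.mk p) *
      ((1 - X^1) ^ 1 * (1 - (X:PowerSeries ℚ)^2) ^ (2 ^ (d-1)) * (1 - X^3) ^ (3 ^ (d-1))
        * (1 - X^4) ^ (4 ^ (d-1)) * (1 - X^5) ^ (5 ^ (d-1)))) = if k = 0 then 1 else 0 := by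
    intro k hk
    rw [← hF]
    exact hp 5 k hk
  have E0 := hkey 0 (by norm_num)
  have E1 := hkey 1 (by norm_num)
  have E2 := hkey 2 (by norm_num)
  have E3 := hkey 3 (by norm_num)
  have E4 := hkey 4 (by norm_num)
  have E5 := hkey 5 (by norm_num)
  simp only [PowerSeries.coeff_mul, Finset.Nat.sum_antidiagonal_eq_sum_range_succ_mk,
    Finset.sum_range_succ, Finset.sum_range_zero, coeff_mk,
    coeff_osp _ _ _ (by norm_num : (0:ℕ) < 1),
    coeff_osp _ _ _ (by norm_num : (0:ℕ) < 2),
    coeff_osp _ _ _ (by norm_num : (0:ℕ) < 3),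
    coeff_osp _ _ _ (by norm_num : (0:ℕ) < 4),
    coeff_osp _ _ _ (by norm_num : (0:ℕ) < 5)] at E0 E1 E2 E3 E4 E5
  norm_num [Nat.choose] at E0 E1 E2 E3 E4 E5
  rw [Nat.cast_choose_two] at E4 E5
  push_cast at E0 E1 E2 E3 E4 E5
  have hp0 : p 0 = 1 := E0
  have hp1 : p 1 = 1 := by linarith
  rw [hp0, hp1] at E2
  have hp2 : p 2 = (2:ℚ)^(d-1) + 1 := by linarith
  rw [hp0, hp1, hp2] at E3
  have hp3 : p 3 = (2:ℚ)^(d-1) + (3:ℚ)^(d-1) + 1 := by linarith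
  rw [hp0, hp1, hp2, hp3] at E4 E5
  have hf : (4:ℚ)^(d-1) = (2:ℚ)^(d-1) * (2:ℚ)^(d-1) := by
    rw [show (4:ℚ) = 2*2 by norm_num, mul_pow]
  have hs : (6:ℚ)^(d-1) = (2:ℚ)^(d-1) * (3:ℚ)^(d-1) := by
    rw [show (6:ℚ) = 2*3 by norm_num, mul_pow]
  constructor
  · linear_combination E5 - hs
  · linear_combination E4 - (1/2) * hf
end
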